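/- Let V be a finite-dimensional real vector space, L a symmetric 2n-multilinear form on V, q a symmetric bilinear form on V, and C > 0 a real constant with L(x,...,x) = C·q(x,x)^n for all x ∈ V. Suppose a, h ∈ V satisfy q(a,a) > 0, q(a,h) = 0, and L(h,h,a,...,a) < 0 (with a appearing 2n−2 times). Then q(h,h) < 0. -/

import Mathlib

open Polynomial

/-- Symmetric multilinear maps take equal values on piecewise vectors built from
finsets of the same cardinality. -/
lemma stmt3_aux_symm {V : Type*} [AddCommGroup V] [Module ℝ V] {m : ℕ}
    (L : MultilinearMap ℝ (fun _ : Fin m => V) ℝ)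
    (hLsymm : ∀ (σ : Equiv.Perm (Fin m)) (v : Fin m → V), L (v ∘ σ) = L v)
    (a h : V) (s t : Finset (Fin m)) (hst : s.card = t.card) :
    L (s.piecewise (fun _ => a) (fun _ => h)) = L (t.piecewise (fun _ => a) (fun _ => h)) := by
  classical
  have hc1 : Fintype.card {x // x ∈ t} = Fintype.card {x // x ∈ s} := by
    simp [Fintype.card_coe, hst]
  have hc2 : Fintype.card {x // ¬ x ∈ t} = Fintype.card {x // ¬ x ∈ s} := by
    rw [Fintype.card_subtype_compl, Fintype.card_subtype_compl]
    simp [Fintype.card_coe, hst]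
  let e : {x // x ∈ t} ≃ {x // x ∈ s} := Fintype.equivOfCardEq hc1
  let e' : {x // ¬ x ∈ t} ≃ {x // ¬ x ∈ s} := Fintype.equivOfCardEq hc2
  let σ : Equiv.Perm (Fin m) :=
    (Equiv.sumCompl (· ∈ t)).symm.trans ((e.sumCongr e').trans (Equiv.sumCompl (· ∈ s)))
  have key : (s.piecewise (fun _ => a) (fun _ => h)) ∘ σ
      = t.piecewise (fun _ => a) (fun _ => h) := by
    funext x
    by_cases hx : x ∈ t
    · have hσ : σ x = (e ⟨x, hx⟩ : Fin m) := by
        simp [σ, Equiv.sumCompl_symm_apply_of_pos (p := (· ∈ t)) hx]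
      have hσs : σ x ∈ s := by rw [hσ]; exact (e ⟨x, hx⟩).2
      simp [Function.comp, Finset.piecewise_eq_of_mem _ _ _ hσs,
        Finset.piecewise_eq_of_mem _ _ _ hx]
    · have hσ : σ x = (e' ⟨x, hx⟩ : Fin m) := by
        simp [σ, Equiv.sumCompl_symm_apply_of_neg (p := (· ∈ t)) hx]
      have hσs : σ x ∉ s := by rw [hσ]; exact (e' ⟨x, hx⟩).2
      simp [Function.comp, Finset.piecewise_eq_of_notMem _ _ _ hσs,
        Finset.piecewise_eq_of_notMem _ _ _ hx]
  rw [← hLsymm σ (s.piecewise (fun _ => a) (fun _ => h)), key]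

lemma stmt3_aux_coeff (r w : ℝ) (n : ℕ) (hn : 1 ≤ n) :
    ((C r + C w * X ^ 2 : ℝ[X]) ^ n).coeff 2 = n * r ^ (n - 1) * w := by
  have expand : (C r + C w * X ^ 2 : ℝ[X]) ^ n
      = ∑ k ∈ Finset.range (n + 1),
          C (r ^ k * w ^ (n - k) * (n.choose k : ℝ)) * X ^ (2 * (n - k)) := by
    rw [add_pow]
    refine Finset.sum_congr rfl fun k _ => ?_
    rw [mul_pow, ← C_pow, ← C_pow, ← pow_mul, C_mul, C_mul, map_natCast]
    ring
  rw [expand, finset_sum_coeff]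
  simp only [coeff_C_mul, coeff_X_pow]
  rw [Finset.sum_eq_single (n - 1)]
  · have h1 : n - (n - 1) = 1 := by omega
    have h2 : n.choose (n - 1) = n := by
      have := Nat.choose_symm (Nat.sub_le n 1)
      rw [h1] at this
      rw [← this, Nat.choose_one_right]
    rw [h1]
    simp [h2]
    ring
  · intro k hk hne
    have : ¬ (2 = 2 * (n - k)) := by
      simp only [Finset.mem_range] at hk
      omega
    simp [this]
  · intro hmem
    exact absurd (Finset.mem_range.mpr (by omega)) hmem

/-- negativity of q on the primitive part. -/
theorem stmt3 {V : Type*} [AddCommGroup V] [Module ℝ V] [FiniteDimensional ℝ V]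
    (n : ℕ) (hn : 1 ≤ n)
    (L : MultilinearMap ℝ (fun _ : Fin (2*n) => V) ℝ)
    (hLsymm : ∀ (σ : Equiv.Perm (Fin (2*n))) (v : Fin (2*n) → V), L (v ∘ σ) = L v)
    (q : V →ₗ[ℝ] V →ₗ[ℝ] ℝ) (hqsymm : ∀ x y, q x y = q y x)
    (C : ℝ) (hC : 0 < C)
    (hFujiki : ∀ x : V, L (fun _ => x) = C * (q x x)^n)
    (a h : V) (ha : 0 < q a a) (hah : q a h = 0)
    (hL : L (fun i => if (i : ℕ) < 2 then h else a) < 0) :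
    q h h < 0 := by
  classical
  set A : Fin (2*n) → V := fun _ => a with hA
  set H : Fin (2*n) → V := fun _ => h with hH
  have hha : q h a = 0 := by rw [hqsymm]; exact hah
  -- the evaluation identity
  have heval : ∀ t : ℝ,
      (∑ s : Finset (Fin (2*n)), L (s.piecewise A H) * t ^ (sᶜ.card))
        = C * (q a a + q h h * t ^ 2) ^ n := by
    intro t
    have h2 : (q (a + t • h)) (a + t • h) = q a a + q h h * t ^ 2 := by
      simp [map_add, map_smul, hah, hha]
      ring
    have h3 : L (fun _ => a + t • h)
        = ∑ s : Finset (Fin (2*n)), L (s.piecewise A (fun _ => t • h)) := by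
      have := L.map_add_univ A (fun _ => t • h)
      simpa [hA, Pi.add_def] using this
    have h4 : ∀ s : Finset (Fin (2*n)),
        L (s.piecewise A (fun _ => t • h)) = L (s.piecewise A H) * t ^ (sᶜ.card) := by
      intro s
      have hpw : s.piecewise A (fun _ => t • h)
          = sᶜ.piecewise (fun i => t • (s.piecewise A H) i) (s.piecewise A H) := by
        funext i
        by_cases hi : i ∈ s <;> simp [Finset.piecewise, hi, hH]
      rw [hpw, L.map_piecewise_smul (fun _ => t) (s.piecewise A H) sᶜ]
      simp [mul_comm]
    calc (∑ s : Finset (Fin (2*n)), L (s.piecewise A H) * t ^ (sᶜ.card))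
        = ∑ s : Finset (Fin (2*n)), L (s.piecewise A (fun _ => t • h)) := by
          refine Finset.sum_congr rfl fun s _ => (h4 s).symm
      _ = L (fun _ => a + t • h) := h3.symm
      _ = C * ((q (a + t • h)) (a + t • h)) ^ n := hFujiki _
      _ = C * (q a a + q h h * t ^ 2) ^ n := by rw [h2]
  -- polynomial identity
  set P : ℝ[X] := ∑ s : Finset (Fin (2*n)),
      Polynomial.C (L (s.piecewise A H)) * X ^ (sᶜ.card) with hP
  set Q : ℝ[X] := Polynomial.C C * (Polynomial.C (q a a) + Polynomial.C (q h h) * X ^ 2) ^ n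
    with hQ
  have hPQ : P = Q := by
    apply Polynomial.funext
    intro t
    rw [hP, hQ]
    simp only [eval_finset_sum, eval_mul, eval_pow, eval_add, eval_C, eval_X]
    exact heval t
  -- coefficient of X^2 on the Q side
  have hQ2 : Q.coeff 2 = C * (n * (q a a) ^ (n - 1) * q h h) := by
    rw [hQ, coeff_C_mul, stmt3_aux_coeff _ _ n hn]
  -- coefficient of X^2 on the P side
  set L0 : ℝ := L (fun i => if (i : ℕ) < 2 then h else a) with hL0
  have h2n : (2:ℕ) ≤ 2 * n := by omega
  set i0 : Fin (2*n) := ⟨0, by omega⟩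
  set i1 : Fin (2*n) := ⟨1, by omega⟩
  set s1 : Finset (Fin (2*n)) := ({i0, i1} : Finset (Fin (2*n)))ᶜ with hs1
  have hi01 : i0 ≠ i1 := by simp [i0, i1, Fin.ext_iff]
  have hs1compl : s1ᶜ.card = 2 := by
    rw [hs1, compl_compl, Finset.card_pair hi01]
  have hs1piece : s1.piecewise A H = fun i : Fin (2*n) => if (i : ℕ) < 2 then h else a := by
    funext i
    have hmem : i ∈ s1 ↔ ¬ ((i : ℕ) < 2) := by
      rw [hs1, Finset.mem_compl, Finset.mem_insert, Finset.mem_singleton]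
      constructor
      · intro hni hlt
        refine hni ?_
        interval_cases hiv : (i : ℕ)
        · exact Or.inl (Fin.ext hiv)
        · exact Or.inr (Fin.ext hiv)
      · intro hnlt hor
        rcases hor with h' | h' <;> subst h' <;> simp [i0, i1] at hnlt
    by_cases hi : (i : ℕ) < 2
    · rw [Finset.piecewise_eq_of_notMem _ _ _ (by rw [hmem]; simpa using hi)]
      simp [hH, hi]
    · rw [Finset.piecewise_eq_of_mem _ _ _ (hmem.mpr hi)]
      simp [hA, hi]
  have hcardconst : ∀ s : Finset (Fin (2*n)), sᶜ.card = 2 → L (s.piecewise A H) = L0 := by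
    intro s hs
    have hcards : s.card = s1.card := by
      have h1 : sᶜ.card = 2 * n - s.card := by
        rw [Finset.card_compl, Fintype.card_fin]
      have h2 : s1ᶜ.card = 2 * n - s1.card := by
        rw [Finset.card_compl, Fintype.card_fin]
      have h3 : s.card ≤ 2 * n := by
        simpa using Finset.card_le_univ s
      have h4 : s1.card ≤ 2 * n := by
        simpa using Finset.card_le_univ s1
      omega
    rw [hL0, ← hs1piece]
    exact stmt3_aux_symm L hLsymm a h s s1 hcards
  have hP2 : P.coeff 2 =
      ((Finset.univ.filter (fun s : Finset (Fin (2*n)) => sᶜ.card = 2)).card : ℝ) * L0 := by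
    rw [hP, finset_sum_coeff]
    have hterm : ∀ s : Finset (Fin (2*n)),
        (Polynomial.C (L (s.piecewise A H)) * X ^ sᶜ.card).coeff 2
          = if sᶜ.card = 2 then L0 else 0 := by
      intro s
      rw [coeff_C_mul, coeff_X_pow]
      by_cases hsc : sᶜ.card = 2
      · simp [hsc, hcardconst s hsc]
      · have : ¬ (2 = sᶜ.card) := fun hh => hsc hh.symm
        simp [hsc, this]
    rw [Finset.sum_congr rfl fun s _ => hterm s, ← Finset.sum_filter,
      Finset.sum_const, nsmul_eq_mul]
  set N := (Finset.univ.filter (fun s : Finset (Fin (2*n)) => sᶜ.card = 2)).card with hN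
  have hNpos : 0 < N := Finset.card_pos.mpr ⟨s1, by simp [hs1compl]⟩
  have hkey : (N : ℝ) * L0 = C * (↑n * (q a a) ^ (n - 1) * q h h) := by
    rw [← hP2, ← hQ2, hPQ]
  have hlt : (N : ℝ) * L0 < 0 :=
    mul_neg_of_pos_of_neg (by exact_mod_cast hNpos) hL
  rw [hkey] at hlt
  have hpow : 0 < (q a a) ^ (n - 1) := pow_pos ha _
  have hnpos : (0 : ℝ) < (n : ℝ) := by exact_mod_cast hn
  by_contra hw
  push_neg at hw
  have : 0 ≤ C * (↑n * (q a a) ^ (n - 1) * q h h) :=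
    mul_nonneg hC.le (mul_nonneg (mul_nonneg hnpos.le hpow.le) hw)
  linarith
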